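/- Let φ : S² → ℝ be continuous and even, and let θ = (θ₁, θ₂, θ₃) ∈ S² with θ' = (θ₁, θ₂) ≠ 0. Define the orthonormal vectors û = (−θ₂, θ₁, 0)/|θ'| and v̂ = (θ₁θ₃, θ₂θ₃, −|θ'|²)/|θ'| in ℝ³, and set u' = (−θ₂, θ₁)/|θ'| ∈ ℝ², v' = (θ₁θ₃, θ₂θ₃)/|θ'| ∈ ℝ², v₃ = −|θ'|. Define Φ : ℝ² → ℝ by Φ(x₁,x₂) = 2·φ((x₁,x₂,1)/√(1+x₁²+x₂²)) / (1+x₁²+x₂²). Then ∫₀^{2π} φ(û·cos t + v̂·sin t) dt = v₃^{−2} · ∫_ℝ Φ( (u'/v₃)·τ + v'/v₃ ) dτ. -/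

import Mathlib

open MeasureTheory Filter Real
open scoped Topology RealInnerProductSpace

noncomputable section

abbrev E3 := EuclideanSpace ℝ (Fin 3)
abbrev E2 := EuclideanSpace ℝ (Fin 2)

def vec3 (a b c : ℝ) : E3 := (WithLp.equiv 2 (Fin 3 → ℝ)).symm ![a, b, c]
def vec2 (a b : ℝ) : E2 := (WithLp.equiv 2 (Fin 2 → ℝ)).symm ![a, b]

/-- The great circle of the unit sphere in `ℝ³` orthogonal to `θ`. -/
def circleSet (θ : E3) : Set E3 := {α | α ∈ Metric.sphere (0:E3) 1 ∧ ⟪θ, α⟫ = 0}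

/-- The Minkowski–Funk transform: integral over the great circle orthogonal to `θ`
with respect to one-dimensional Hausdorff (arc-length) measure. -/
def funkT (φ : E3 → ℝ) (θ : E3) : ℝ := ∫ α in circleSet θ, φ α ∂μH[1]

/-- The spherical Radon transform with centers on the sphere of radius `r`. -/
def sphRadon (r : ℝ) (f : E3 → ℝ) (α : E3) (t : ℝ) : ℝ :=
  ∫ β in Metric.sphere (0:E3) 1, f (r • α + t • β) ∂μH[2]

/-- The transform `R_P` arising in PAT with circular integrating detectors. -/
def RP (r : ℝ) (f : E3 → ℝ) (θ : E3) (t : ℝ) : ℝ :=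
  ∫ α in circleSet θ, (∫ β in Metric.sphere (0:E3) 1, f (r • α + t • β) ∂μH[2]) ∂μH[1]

/-- Rotation of a vector in `ℝ²` by `π/2`. -/
def perp (ω : E2) : E2 := vec2 (-(ω 1)) (ω 0)

/-- The two-dimensional Radon transform. -/
def radon2 (Φ : E2 → ℝ) (ω : E2) (s : ℝ) : ℝ := ∫ ν : ℝ, Φ (s • ω + ν • perp ω)

/-- Principal value of `∫ F`, where the singular set is removed via `{s | ε < |e s|}`:
the limit as `ε → 0⁺` of the integrals over `{s | |e s| > ε}`. -/
def pv (F : ℝ → ℝ) (e : ℝ → ℝ) : ℝ :=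
  limUnder (𝓝[>] (0:ℝ)) (fun ε => ∫ s in {s | ε < |e s|}, F s)

/-- The Hilbert transform `Hu(s) = (1/π) p.v. ∫ u(s')/(s-s') ds'`. -/
def hilbertT (u : ℝ → ℝ) (s : ℝ) : ℝ :=
  (1/π) * pv (fun s' => u s' / (s - s')) (fun s' => s - s')

/-- The backprojection operator `R#u(x) = ∫_{S¹} u(ω, x·ω) dS(ω)`. -/
def backproj (u : E2 → ℝ → ℝ) (x : E2) : ℝ :=
  ∫ ω in Metric.sphere (0:E2) 1, u ω ⟪x, ω⟫ ∂μH[1]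

lemma vec3_apply0 (a b c : ℝ) : vec3 a b c 0 = a := rfl
lemma vec3_apply1 (a b c : ℝ) : vec3 a b c 1 = b := rfl
lemma vec3_apply2 (a b c : ℝ) : vec3 a b c 2 = c := rfl
lemma vec2_apply0 (a b : ℝ) : vec2 a b 0 = a := rfl
lemma vec2_apply1 (a b : ℝ) : vec2 a b 1 = b := rfl

lemma norm_vec3 (a b c : ℝ) : ‖vec3 a b c‖ = √(a^2+b^2+c^2) := by
  rw [EuclideanSpace.norm_eq]
  simp [Fin.sum_univ_three, vec3_apply0, vec3_apply1, vec3_apply2, sq_abs]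

lemma norm_vec2 (a b : ℝ) : ‖vec2 a b‖ = √(a^2+b^2) := by
  rw [EuclideanSpace.norm_eq]
  simp [Fin.sum_univ_two, vec2_apply0, vec2_apply1, sq_abs]

set_option maxHeartbeats 1000000 in
/-- parametrized great-circle integral of `φ` equals a line integral of `Φ`. -/
theorem stmt15 (φ : E3 → ℝ) (hc : ContinuousOn φ (Metric.sphere 0 1))
    (he : ∀ α ∈ Metric.sphere (0:E3) 1, φ α = φ (-α))
    (θ : E3) (hθ : θ ∈ Metric.sphere (0:E3) 1) (hθ' : vec2 (θ 0) (θ 1) ≠ 0)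
    (Φ : E2 → ℝ)
    (hΦ : ∀ x : E2, Φ x =
      2 * φ ((Real.sqrt (1 + (x 0)^2 + (x 1)^2))⁻¹ • vec3 (x 0) (x 1) 1)
        / (1 + (x 0)^2 + (x 1)^2)) :
    (∫ t in (0:ℝ)..(2*π),
      φ (Real.cos t • (‖vec2 (θ 0) (θ 1)‖⁻¹ • vec3 (-(θ 1)) (θ 0) 0) +
         Real.sin t • (‖vec2 (θ 0) (θ 1)‖⁻¹ •
           vec3 (θ 0 * θ 2) (θ 1 * θ 2) (-‖vec2 (θ 0) (θ 1)‖^2))))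
      = ((-‖vec2 (θ 0) (θ 1)‖)^2)⁻¹ *
        ∫ τ : ℝ, Φ ((τ / -‖vec2 (θ 0) (θ 1)‖) • (‖vec2 (θ 0) (θ 1)‖⁻¹ • vec2 (-(θ 1)) (θ 0)) +
          (-‖vec2 (θ 0) (θ 1)‖)⁻¹ • (‖vec2 (θ 0) (θ 1)‖⁻¹ • vec2 (θ 0 * θ 2) (θ 1 * θ 2))) := by
  set a := θ 0 with ha
  set b := θ 1 with hb
  set c := θ 2 with hcc
  set r := ‖vec2 a b‖ with hrdef
  have hrpos : 0 < r := norm_pos_iff.mpr hθ'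
  have hr0 : r ≠ 0 := ne_of_gt hrpos
  have hr2 : r ^ 2 = a ^ 2 + b ^ 2 := by
    rw [hrdef, norm_vec2, sq_sqrt (by positivity)]
  have hsum : a ^ 2 + b ^ 2 + c ^ 2 = 1 := by
    have h1 : θ = vec3 a b c := by
      apply PiLp.ext; intro i; fin_cases i <;> rfl
    have h2 := mem_sphere_zero_iff_norm.mp hθ
    rw [h1, norm_vec3] at h2
    exact Real.sqrt_eq_one.mp h2
  -- the circle parametrization in coordinates
  have hα : ∀ t : ℝ,
      Real.cos t • (r⁻¹ • vec3 (-b) a 0) + Real.sin t • (r⁻¹ • vec3 (a*c) (b*c) (-r^2))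
        = vec3 ((Real.sin t * (a*c) - Real.cos t * b)/r)
            ((Real.cos t * a + Real.sin t * (b*c))/r) (-(Real.sin t * r)) := by
    intro t
    apply PiLp.ext; intro i
    fin_cases i <;> simp [vec3_apply0, vec3_apply1, vec3_apply2] <;> field_simp <;>
      (try ring) <;> tauto
  set V : ℝ → E3 := fun t =>
    vec3 ((Real.sin t * (a*c) - Real.cos t * b)/r)
      ((Real.cos t * a + Real.sin t * (b*c))/r) (-(Real.sin t * r)) with hV
  have hVmem : ∀ t : ℝ, V t ∈ Metric.sphere (0:E3) 1 := by
    intro t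
    rw [mem_sphere_zero_iff_norm, hV]
    rw [norm_vec3]
    rw [show ((Real.sin t * (a*c) - Real.cos t * b)/r)^2
        + ((Real.cos t * a + Real.sin t * (b*c))/r)^2 + (-(Real.sin t * r))^2 = 1 from by
      have hp := Real.sin_sq_add_cos_sq t
      field_simp
      linear_combination (a^2+b^2) * Real.sin t^2 * hsum + (a^2+b^2) * hp
        + (Real.sin t^2*(a^2+b^2) + Real.sin t^2*r^2 - 1) * hr2]
    exact Real.sqrt_one
  set f : ℝ → ℝ := fun t => φ (V t) with hfdef
  have hVcont : Continuous V := by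
    have hVeq : V = fun t =>
        Real.cos t • (r⁻¹ • vec3 (-b) a 0) + Real.sin t • (r⁻¹ • vec3 (a*c) (b*c) (-r^2)) :=
      funext fun t => (hα t).symm
    rw [hVeq]
    exact (Real.continuous_cos.smul continuous_const).add
      (Real.continuous_sin.smul continuous_const)
  have hfc : Continuous f := hc.comp_continuous hVcont hVmem
  have hfint : ∀ u v : ℝ, IntervalIntegrable f volume u v :=
    fun u v => hfc.intervalIntegrable u v
  -- antipodal symmetry
  have hVneg : ∀ t : ℝ, V (t + π) = -(V t) := by
    intro t
    rw [hV]
    apply PiLp.ext; intro i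
    fin_cases i <;>
      simp [vec3_apply0, vec3_apply1, vec3_apply2, Real.cos_add_pi, Real.sin_add_pi] <;> ring
  have hfper : ∀ t : ℝ, f (t + π) = f t := by
    intro t
    rw [hfdef]
    simp only
    rw [hVneg t, ← he (V t) (hVmem t)]
  -- the left-hand integral written via f
  have hLHS : (∫ t in (0:ℝ)..(2*π),
      φ (Real.cos t • (r⁻¹ • vec3 (-b) a 0) +
         Real.sin t • (r⁻¹ • vec3 (a*c) (b*c) (-r^2)))) = ∫ t in (0:ℝ)..(2*π), f t := by
    refine intervalIntegral.integral_congr fun t _ => ?_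
    rw [hfdef]; simp only; rw [hα t, hV]
  -- split and fold the period
  have hsplit : (∫ t in (0:ℝ)..(2*π), f t) = 2 * ∫ t in (0:ℝ)..π, f t := by
    have hadd := intervalIntegral.integral_add_adjacent_intervals (a := (0:ℝ)) (b := π)
      (c := 2*π) (hfint 0 π) (hfint π (2*π))
    have hshift : (∫ t in (0:ℝ)..π, f (t + π)) = ∫ t in π..(2*π), f t := by
      rw [intervalIntegral.integral_comp_add_right f π]
      norm_num
      ring_nf
    have hsame : (∫ t in (0:ℝ)..π, f (t + π)) = ∫ t in (0:ℝ)..π, f t :=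
      intervalIntegral.integral_congr fun t _ => hfper t
    rw [← hadd, ← hshift, hsame]; ring
  -- pointwise identity for the right-hand integrand
  have hS : ∀ τ : ℝ, Real.sqrt (1 + τ^2) ≠ 0 := fun τ => by positivity
  have hX : ∀ τ : ℝ,
      (τ / -r) • (r⁻¹ • vec2 (-b) a) + (-r)⁻¹ • (r⁻¹ • vec2 (a*c) (b*c))
        = vec2 ((τ*b - a*c)/r^2) ((-(τ*a) - b*c)/r^2) := by
    intro τ
    apply PiLp.ext; intro i
    fin_cases i <;> simp [vec2_apply0, vec2_apply1] <;> field_simp <;> ring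
  have hg : ∀ τ : ℝ,
      Φ ((τ / -r) • (r⁻¹ • vec2 (-b) a) + (-r)⁻¹ • (r⁻¹ • vec2 (a*c) (b*c)))
        = |1/(1+τ^2)| • ((2*r^2) * f (π/2 - Real.arctan τ)) := by
    intro τ
    rw [hX τ, hΦ]
    rw [vec2_apply0, vec2_apply1]
    have hden : 1 + ((τ*b - a*c)/r^2)^2 + ((-(τ*a) - b*c)/r^2)^2 = (1+τ^2)/r^2 := by
      field_simp
      linear_combination (r^4 - r^2*τ^2 - r^2*c^2 + (r^2 - τ^2 - c^2) * (1 - r^2)) * hr2 + r^2 * hsum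
    rw [hden]
    have hsqr : Real.sqrt ((1+τ^2)/r^2) = Real.sqrt (1+τ^2) / r := by
      rw [show (1+τ^2)/r^2 = (Real.sqrt (1+τ^2)/r)^2 by
          rw [div_pow, Real.sq_sqrt (by positivity)],
        Real.sqrt_sq (by positivity)]
    rw [hsqr]
    have hw : (Real.sqrt (1+τ^2)/r)⁻¹ • vec3 ((τ*b - a*c)/r^2) ((-(τ*a) - b*c)/r^2) 1
        = -(V (π/2 - Real.arctan τ)) := by
      rw [hV]
      apply PiLp.ext; intro i
      have hS' : Real.sqrt (1 + τ^2) ≠ 0 := by positivity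
      fin_cases i <;>
        simp [Real.cos_pi_div_two_sub, Real.sin_pi_div_two_sub, Real.sin_arctan,
          Real.cos_arctan, vec3_apply0, vec3_apply1, vec3_apply2] <;>
        field_simp <;> ring
    rw [hw, ← he (V (π/2 - Real.arctan τ)) (hVmem _)]
    rw [hfdef]
    simp only
    rw [abs_of_pos (by positivity : (0:ℝ) < 1/(1+τ^2)), smul_eq_mul]
    have h1 : (1:ℝ) + τ^2 ≠ 0 := by positivity
    field_simp
  -- change of variables via arctan
  have hkey : (∫ τ : ℝ,
      Φ ((τ / -r) • (r⁻¹ • vec2 (-b) a) + (-r)⁻¹ • (r⁻¹ • vec2 (a*c) (b*c))))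
      = ∫ u in Set.Ioo (-(π/2)) (π/2), (2*r^2) * f (π/2 - u) := by
    have hcov := MeasureTheory.integral_image_eq_integral_abs_deriv_smul
      (s := Set.univ) (f := Real.arctan) (f' := fun τ => 1/(1+τ^2)) MeasurableSet.univ
      (fun x _ => (Real.hasDerivAt_arctan x).hasDerivWithinAt)
      (Real.arctan_injective.injOn)
      (fun u => (2*r^2) * f (π/2 - u))
    rw [Set.image_univ, Real.range_arctan] at hcov
    rw [hcov, MeasureTheory.Measure.restrict_univ]
    exact integral_congr_ae (Filter.Eventually.of_forall fun τ => (hg τ))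
  have hIoo : (∫ u in Set.Ioo (-(π/2)) (π/2), (2*r^2) * f (π/2 - u))
      = (2*r^2) * ∫ t in (0:ℝ)..π, f t := by
    rw [← MeasureTheory.integral_Ioc_eq_integral_Ioo,
      ← intervalIntegral.integral_of_le (by linarith [Real.pi_pos] : -(π/2) ≤ π/2)]
    rw [intervalIntegral.integral_comp_sub_left (fun u => (2*r^2) * f u) (π/2)]
    rw [show π/2 - π/2 = (0:ℝ) by ring, show π/2 - -(π/2) = π by ring]
    rw [intervalIntegral.integral_const_mul]
  rw [hLHS, hsplit, hkey, hIoo]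
  rw [show (-r)^2 = r^2 by ring]
  field_simp
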